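/- arXiv:2106.13983 — 2 statements merged into one kernel-verified Lean document; each statement's English description precedes it below -/
import Mathlib

section
/- For a positive integer n, define φ₂(n) as the number of pairs (a₁, a₂) with 1 ≤ a₁, a₂ ≤ n, gcd(a₁a₂, n) = 1 and gcd(a₁+a₂, n) = 1. Then ∑ gcd(a₁+a₂−1, n) = φ₂(n)·σ₀(n), where the sum runs over all such pairs (a₁, a₂). -/
section Aux

lemma SR.ker_count (n d : ℕ) [NeZero n] (h : d ∣ n) :
    d.totient * (Finset.univ.filter
      (fun s : ZMod n => IsUnit s ∧ ZMod.castHom h (ZMod d) s = 1)).card = n.totient := by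
  haveI : NeZero d := ⟨fun h0 => (NeZero.ne n) (Nat.eq_zero_of_zero_dvd (h0 ▸ h))⟩
  have hsurj := ZMod.unitsMap_surjective (m := n) h
  have key : Nat.card (ZMod n)ˣ
      = Nat.card (ZMod d)ˣ * Nat.card (MonoidHom.ker (ZMod.unitsMap h)) := by
    rw [← Nat.card_congr (QuotientGroup.quotientKerEquivOfSurjective _ hsurj).toEquiv]
    exact Subgroup.card_eq_card_quotient_mul_card_subgroup _
  have hcard : (Finset.univ.filter
      (fun s : ZMod n => IsUnit s ∧ ZMod.castHom h (ZMod d) s = 1)).card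
      = Nat.card (MonoidHom.ker (ZMod.unitsMap h)) := by
    rw [Nat.card_eq_fintype_card, ← Fintype.card_subtype]
    apply Fintype.card_congr
    refine
      { toFun := fun s => ⟨s.2.1.unit, ?_⟩
        invFun := fun u => ⟨(u.1 : ZMod n), u.1.isUnit, ?_⟩
        left_inv := fun s => Subtype.ext (by simp)
        right_inv := fun u => Subtype.ext (Units.ext (by simp)) }
    · have hs := s.2.2
      simp only [MonoidHom.mem_ker, ZMod.unitsMap_def]
      ext
      simpa using hs
    · have hu := u.2
      simp only [MonoidHom.mem_ker, ZMod.unitsMap_def] at hu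
      have := congrArg (Units.val) hu
      simpa using this
  rw [hcard, ← ZMod.card_units_eq_totient n, ← ZMod.card_units_eq_totient d,
    ← Nat.card_eq_fintype_card, ← Nat.card_eq_fintype_card, key]

lemma SR.gcd_eq_sum (n m : ℕ) (hn : n ≠ 0) :
    Nat.gcd m n = ∑ d ∈ n.divisors.filter (· ∣ m), d.totient := by
  have hset : (Nat.gcd m n).divisors = n.divisors.filter (· ∣ m) := by
    ext d
    simp only [Nat.mem_divisors, Finset.mem_filter, Nat.dvd_gcd_iff]
    constructor
    · rintro ⟨⟨h1, h2⟩, -⟩; exact ⟨⟨h2, hn⟩, h1⟩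
    · rintro ⟨⟨h2, -⟩, h1⟩
      exact ⟨⟨h1, h2⟩, fun h0 => hn (Nat.eq_zero_of_gcd_eq_zero_right h0)⟩
  rw [← hset, Nat.sum_totient]

lemma SR.menon (n : ℕ) [NeZero n] :
    ∑ s ∈ Finset.univ.filter (fun s : ZMod n => IsUnit s),
      Nat.gcd (s - 1).val n = n.totient * n.divisors.card := by
  have step1 : ∀ s : ZMod n, Nat.gcd (s - 1).val n
      = ∑ d ∈ n.divisors, if d ∣ (s - 1).val then d.totient else 0 := by
    intro s
    rw [SR.gcd_eq_sum n _ (NeZero.ne n), Finset.sum_filter]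
  calc
    ∑ s ∈ Finset.univ.filter (fun s : ZMod n => IsUnit s), Nat.gcd (s - 1).val n
      = ∑ s ∈ Finset.univ.filter (fun s : ZMod n => IsUnit s),
          ∑ d ∈ n.divisors, if d ∣ (s - 1).val then d.totient else 0 := by
        exact Finset.sum_congr rfl fun s _ => step1 s
    _ = ∑ d ∈ n.divisors, ∑ s ∈ Finset.univ.filter (fun s : ZMod n => IsUnit s),
          if d ∣ (s - 1).val then d.totient else 0 := Finset.sum_comm
    _ = ∑ d ∈ n.divisors, n.totient := by
        refine Finset.sum_congr rfl fun d hd => ?_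
        have hdvd : d ∣ n := (Nat.mem_divisors.mp hd).1
        haveI : NeZero d := ⟨fun h0 => (NeZero.ne n) (Nat.eq_zero_of_zero_dvd (h0 ▸ hdvd))⟩
        have hset : (Finset.univ.filter (fun s : ZMod n => IsUnit s)).filter
              (fun s => d ∣ (s - 1).val)
            = Finset.univ.filter
              (fun s : ZMod n => IsUnit s ∧ ZMod.castHom hdvd (ZMod d) s = 1) := by
          ext s
          simp only [Finset.mem_filter, Finset.mem_univ, true_and, and_congr_right_iff]
          intro _hs
          rw [← ZMod.natCast_eq_zero_iff, ZMod.natCast_val]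
          rw [show ((ZMod.cast (s - 1 : ZMod n) : ZMod d)) = ZMod.castHom hdvd (ZMod d) (s - 1)
            from rfl]
          rw [map_sub, map_one, sub_eq_zero]
        rw [← Finset.sum_filter, hset, Finset.sum_const, smul_eq_mul, mul_comm,
          SR.ker_count n d hdvd]
    _ = n.totient * n.divisors.card := by
        rw [Finset.sum_const, smul_eq_mul, mul_comm]

lemma SR.sum_pairs (n : ℕ) [NeZero n] (g : ZMod n → ℕ) :
    ∑ p ∈ Finset.univ.filter
        (fun p : ZMod n × ZMod n => IsUnit (p.1 * p.2) ∧ IsUnit (p.1 + p.2)), g (p.1 + p.2)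
    = (Finset.univ.filter (fun b : ZMod n => IsUnit b ∧ IsUnit (1 - b))).card
      * ∑ s ∈ Finset.univ.filter (fun s : ZMod n => IsUnit s), g s := by
  have hinv : ∀ a : ZMod n, IsUnit a → a * a⁻¹ = 1 := fun a h => ZMod.mul_inv_of_unit a h
  have hinvu : ∀ a : ZMod n, IsUnit a → IsUnit a⁻¹ := fun a h =>
    IsUnit.of_mul_eq_one _ (by rw [mul_comm]; exact hinv a h)
  have step : ∑ p ∈ Finset.univ.filter
        (fun p : ZMod n × ZMod n => IsUnit (p.1 * p.2) ∧ IsUnit (p.1 + p.2)), g (p.1 + p.2)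
      = ∑ q ∈ (Finset.univ.filter (fun s : ZMod n => IsUnit s)) ×ˢ
          (Finset.univ.filter (fun b : ZMod n => IsUnit b ∧ IsUnit (1 - b))), g q.1 := by
    refine Finset.sum_nbij' (fun p => (p.1 + p.2, p.1 * (p.1 + p.2)⁻¹))
      (fun q => (q.1 * q.2, q.1 * (1 - q.2))) ?_ ?_ ?_ ?_ ?_
    · rintro ⟨x, y⟩ hp
      simp only [Finset.mem_filter, Finset.mem_univ, true_and] at hp
      obtain ⟨hxy, hs⟩ := hp
      have hx : IsUnit x := isUnit_of_mul_isUnit_left hxy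
      have hy : IsUnit y := isUnit_of_mul_isUnit_right hxy
      have h1 : (x + y) * (x + y)⁻¹ = 1 := hinv _ hs
      have h2 : 1 - x * (x + y)⁻¹ = y * (x + y)⁻¹ := by
        calc 1 - x * (x + y)⁻¹ = (x + y) * (x + y)⁻¹ - x * (x + y)⁻¹ := by rw [h1]
          _ = ((x + y) - x) * (x + y)⁻¹ := (sub_mul _ _ _).symm
          _ = y * (x + y)⁻¹ := by rw [add_sub_cancel_left]
      simp only [Finset.mem_product, Finset.mem_filter, Finset.mem_univ, true_and]
      exact ⟨hs, hx.mul (hinvu _ hs), by rw [h2]; exact hy.mul (hinvu _ hs)⟩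
    · rintro ⟨s, b⟩ hq
      simp only [Finset.mem_product, Finset.mem_filter, Finset.mem_univ, true_and] at hq
      obtain ⟨hs, hb, h1b⟩ := hq
      have hsum : s * b + s * (1 - b) = s := by ring
      simp only [Finset.mem_filter, Finset.mem_univ, true_and]
      refine ⟨?_, by rw [hsum]; exact hs⟩
      exact (hs.mul hb).mul (hs.mul h1b)
    · rintro ⟨x, y⟩ hp
      simp only [Finset.mem_filter, Finset.mem_univ, true_and] at hp
      obtain ⟨hxy, hs⟩ := hp
      have h1 : (x + y) * (x + y)⁻¹ = 1 := hinv _ hs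
      have e1 : (x + y) * (x * (x + y)⁻¹) = x := by
        rw [mul_comm x, ← mul_assoc, h1, one_mul]
      have e2 : (x + y) * (1 - x * (x + y)⁻¹) = y := by
        rw [mul_sub, mul_one, e1, add_sub_cancel_left]
      exact Prod.ext (by simpa using e1) (by simpa using e2)
    · rintro ⟨s, b⟩ hq
      simp only [Finset.mem_product, Finset.mem_filter, Finset.mem_univ, true_and] at hq
      obtain ⟨hs, hb, h1b⟩ := hq
      have hsum : s * b + s * (1 - b) = s := by ring
      have h1 : s * s⁻¹ = 1 := hinv _ hs
      have e2 : (s * b) * (s * b + s * (1 - b))⁻¹ = b := by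
        rw [hsum, mul_comm s b, mul_assoc, h1, mul_one]
      exact Prod.ext (by simpa using hsum) (by simpa using e2)
    · intro p _
      rfl
  rw [step, Finset.sum_product]
  simp only [Finset.sum_const, smul_eq_mul]
  rw [Finset.mul_sum]

lemma SR.card_units_filter (n : ℕ) [NeZero n] :
    (Finset.univ.filter (fun s : ZMod n => IsUnit s)).card = n.totient := by
  rw [← Fintype.card_subtype, ← ZMod.card_units_eq_totient n]
  exact Fintype.card_congr
    { toFun := fun s => s.2.unit
      invFun := fun u => ⟨(u : ZMod n), u.isUnit⟩
      left_inv := fun s => Subtype.ext (by simp)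
      right_inv := fun u => Units.ext (by simp) }

noncomputable def SR.rep (n : ℕ) [NeZero n] (x : ZMod n) : ℕ := if x = 0 then n else x.val

lemma SR.rep_mem (n : ℕ) [NeZero n] (x : ZMod n) : SR.rep n x ∈ Finset.Icc 1 n := by
  unfold SR.rep
  split_ifs with h
  · simp [Nat.one_le_iff_ne_zero, NeZero.ne n]
  · have h1 : x.val ≠ 0 := fun h0 => h (by rwa [ZMod.val_eq_zero] at h0)
    have h2 : x.val < n := ZMod.val_lt x
    simp [Nat.one_le_iff_ne_zero, h1, h2.le]

lemma SR.cast_rep (n : ℕ) [NeZero n] (x : ZMod n) : ((SR.rep n x : ℕ) : ZMod n) = x := by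
  unfold SR.rep
  split_ifs with h
  · simp [h]
  · exact ZMod.natCast_rightInverse x

lemma SR.rep_cast (n : ℕ) [NeZero n] (a : ℕ) (ha : a ∈ Finset.Icc 1 n) :
    SR.rep n ((a : ℕ) : ZMod n) = a := by
  simp only [Finset.mem_Icc] at ha
  unfold SR.rep
  split_ifs with h
  · have hdvd : n ∣ a := (ZMod.natCast_eq_zero_iff a n).mp h
    exact le_antisymm (Nat.le_of_dvd (lt_of_lt_of_le one_pos ha.1) hdvd) ha.2
  · have hlt : a < n := by
      rcases lt_or_eq_of_le ha.2 with h2 | h2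
      · exact h2
      · exact absurd (by simp [h2]) h
    exact ZMod.val_natCast_of_lt hlt

lemma SR.gcd_transfer (n : ℕ) [NeZero n] (a₁ a₂ : ℕ) (h1 : 1 ≤ a₁) :
    Nat.gcd (a₁ + a₂ - 1) n = Nat.gcd (((a₁ : ZMod n) + a₂ - 1).val) n := by
  have hle : 1 ≤ a₁ + a₂ := le_trans h1 (Nat.le_add_right _ _)
  have hcast : (((a₁ + a₂ - 1 : ℕ)) : ZMod n) = (a₁ : ZMod n) + a₂ - 1 := by
    rw [Nat.cast_sub hle]; push_cast; ring
  rw [← hcast, ZMod.val_natCast]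
  conv_lhs => rw [Nat.gcd_comm, Nat.gcd_rec]

/-- Transfer the natural-number filtered set to the `ZMod n` filtered set. -/
lemma SR.main_transfer (n : ℕ) [NeZero n] (f : ZMod n → ℕ) :
    ∑ a ∈ ((Finset.Icc 1 n) ×ˢ (Finset.Icc 1 n)).filter
        (fun a => Nat.gcd (a.1 * a.2) n = 1 ∧ Nat.gcd (a.1 + a.2) n = 1),
      f ((a.1 : ZMod n) + (a.2 : ZMod n))
    = ∑ p ∈ Finset.univ.filter
        (fun p : ZMod n × ZMod n => IsUnit (p.1 * p.2) ∧ IsUnit (p.1 + p.2)), f (p.1 + p.2) := by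
  refine Finset.sum_nbij' (fun a => ((a.1 : ZMod n), (a.2 : ZMod n)))
    (fun p => (SR.rep n p.1, SR.rep n p.2)) ?_ ?_ ?_ ?_ ?_
  · rintro ⟨a₁, a₂⟩ ha
    simp only [Finset.mem_filter, Finset.mem_product] at ha
    obtain ⟨-, hg1, hg2⟩ := ha
    simp only [Finset.mem_filter, Finset.mem_univ, true_and]
    constructor
    · rw [show ((a₁ : ZMod n) * a₂) = ((a₁ * a₂ : ℕ) : ZMod n) by push_cast; ring,
        ZMod.isUnit_iff_coprime]
      exact hg1
    · rw [show ((a₁ : ZMod n) + a₂) = ((a₁ + a₂ : ℕ) : ZMod n) by push_cast; ring,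
        ZMod.isUnit_iff_coprime]
      exact hg2
  · rintro ⟨x, y⟩ hp
    simp only [Finset.mem_filter, Finset.mem_univ, true_and] at hp
    obtain ⟨h1, h2⟩ := hp
    simp only [Finset.mem_filter, Finset.mem_product]
    refine ⟨⟨SR.rep_mem n x, SR.rep_mem n y⟩, ?_, ?_⟩
    · exact (ZMod.isUnit_iff_coprime _ n).mp (by
        rw [show (((SR.rep n x * SR.rep n y : ℕ)) : ZMod n) = x * y by
          push_cast; rw [SR.cast_rep, SR.cast_rep]]
        exact h1)
    · exact (ZMod.isUnit_iff_coprime _ n).mp (by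
        rw [show (((SR.rep n x + SR.rep n y : ℕ)) : ZMod n) = x + y by
          push_cast; rw [SR.cast_rep, SR.cast_rep]]
        exact h2)
  · rintro ⟨a₁, a₂⟩ ha
    simp only [Finset.mem_filter, Finset.mem_product] at ha
    exact Prod.ext (by simpa using SR.rep_cast n a₁ ha.1.1)
      (by simpa using SR.rep_cast n a₂ ha.1.2)
  · rintro ⟨x, y⟩ _
    exact Prod.ext (by simpa using SR.cast_rep n x) (by simpa using SR.cast_rep n y)
  · intro a _
    rfl

end Aux

/-- `φ₂(n)`: the number of pairs `(a₁, a₂)` with `1 ≤ a₁, a₂ ≤ n`,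
`gcd(a₁a₂, n) = 1` and `gcd(a₁+a₂, n) = 1`. -/
def phiTwo (n : ℕ) : ℕ :=
  (((Finset.Icc 1 n) ×ˢ (Finset.Icc 1 n)).filter
    (fun a => Nat.gcd (a.1 * a.2) n = 1 ∧ Nat.gcd (a.1 + a.2) n = 1)).card

/-- **Sita Ramaiah's identity**: `∑ gcd(a₁+a₂−1, n) = φ₂(n)·σ₀(n)`, the sum
running over pairs `(a₁,a₂)` with `1 ≤ a₁,a₂ ≤ n`, `gcd(a₁a₂,n) = 1` and
`gcd(a₁+a₂,n) = 1`. -/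
theorem sita_ramaiah_identity (n : ℕ) (hn : 0 < n) :
    ∑ a ∈ ((Finset.Icc 1 n) ×ˢ (Finset.Icc 1 n)).filter
        (fun a => Nat.gcd (a.1 * a.2) n = 1 ∧ Nat.gcd (a.1 + a.2) n = 1),
      Nat.gcd (a.1 + a.2 - 1) n =
      phiTwo n * n.divisors.card := by
  haveI : NeZero n := ⟨hn.ne'⟩
  set W := Finset.univ.filter (fun b : ZMod n => IsUnit b ∧ IsUnit (1 - b)) with hW
  have lhs_eq : ∑ a ∈ ((Finset.Icc 1 n) ×ˢ (Finset.Icc 1 n)).filter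
        (fun a => Nat.gcd (a.1 * a.2) n = 1 ∧ Nat.gcd (a.1 + a.2) n = 1),
      Nat.gcd (a.1 + a.2 - 1) n
      = W.card * (n.totient * n.divisors.card) := by
    have h1 : ∀ a ∈ ((Finset.Icc 1 n) ×ˢ (Finset.Icc 1 n)).filter
        (fun a => Nat.gcd (a.1 * a.2) n = 1 ∧ Nat.gcd (a.1 + a.2) n = 1),
        Nat.gcd (a.1 + a.2 - 1) n
          = (fun s : ZMod n => Nat.gcd ((s - 1).val) n) ((a.1 : ZMod n) + (a.2 : ZMod n)) := by
      rintro ⟨a₁, a₂⟩ ha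
      simp only [Finset.mem_filter, Finset.mem_product, Finset.mem_Icc] at ha
      exact SR.gcd_transfer n a₁ a₂ ha.1.1.1
    rw [Finset.sum_congr rfl h1,
      SR.main_transfer n (fun s : ZMod n => Nat.gcd ((s - 1).val) n),
      SR.sum_pairs n (fun s : ZMod n => Nat.gcd ((s - 1).val) n), SR.menon n]
  have rhs_eq : phiTwo n = W.card * n.totient := by
    have h2 : phiTwo n = ∑ a ∈ ((Finset.Icc 1 n) ×ˢ (Finset.Icc 1 n)).filter
        (fun a => Nat.gcd (a.1 * a.2) n = 1 ∧ Nat.gcd (a.1 + a.2) n = 1),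
        (fun _ : ZMod n => 1) ((a.1 : ZMod n) + (a.2 : ZMod n)) := by
      simp [phiTwo]
    rw [h2, SR.main_transfer n (fun _ : ZMod n => 1),
      SR.sum_pairs n (fun _ : ZMod n => 1)]
    simp [SR.card_units_filter n]
    exact Or.inl rfl
  rw [lhs_eq, rhs_eq, mul_assoc]
end

section
/- For a positive integer n, φ₂(n) = φ(n)² · ∏_{p | n} (1 − 1/(p−1)), where φ₂(n) counts pairs (a₁, a₂) ∈ {1,…,n}² with gcd(a₁a₂, n) = 1 and gcd(a₁+a₂, n) = 1, and the product is over prime divisors of n. -/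
open Finset

lemma prodIsUnitIff {M N : Type*} [Monoid M] [Monoid N] (x : M × N) :
    IsUnit x ↔ IsUnit x.1 ∧ IsUnit x.2 := by
  constructor
  · rintro ⟨u, rfl⟩
    exact ⟨⟨(MulEquiv.prodUnits u).1, rfl⟩, ⟨(MulEquiv.prodUnits u).2, rfl⟩⟩
  · rintro ⟨⟨u, hu⟩, ⟨v, hv⟩⟩
    exact ⟨MulEquiv.prodUnits.symm (u, v), by simp [MulEquiv.prodUnits, hu, hv]⟩

lemma mulEquivIsUnit {M N : Type*} [Monoid M] [Monoid N] (e : M ≃* N) (x : M) :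
    IsUnit (e x) ↔ IsUnit x :=
  ⟨fun h => by simpa using h.map e.symm.toMonoidHom, fun h => h.map e.toMonoidHom⟩

open scoped Classical in
/-- `#{c : ZMod n | c and 1+c both units}`. -/
noncomputable def carlitzH (n : ℕ) : ℕ :=
  Nat.card {c : ZMod n // IsUnit c ∧ IsUnit (1 + c)}

open scoped Classical in
lemma carlitzH_eq_card (n : ℕ) [NeZero n] :
    carlitzH n = (Finset.univ.filter (fun c : ZMod n => IsUnit c ∧ IsUnit (1 + c))).card := by
  rw [carlitzH, Nat.card_eq_fintype_card, Fintype.card_subtype]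

open scoped Classical in
lemma carlitzH_one : carlitzH 1 = 1 := by
  rw [carlitzH_eq_card]
  have : ∀ c : ZMod 1, IsUnit c := fun c => by
    rw [Subsingleton.elim c 1]; exact isUnit_one
  rw [Finset.filter_true_of_mem (fun c _ => ⟨this c, this _⟩), Finset.card_univ, ZMod.card]

open scoped Classical in
lemma carlitzH_mul {m n : ℕ} [NeZero m] [NeZero n] (h : m.Coprime n) :
    carlitzH (m * n) = carlitzH m * carlitzH n := by
  haveI : NeZero (m * n) := ⟨mul_ne_zero (NeZero.ne m) (NeZero.ne n)⟩
  have e := ZMod.chineseRemainder h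
  rw [carlitzH_eq_card, carlitzH_eq_card, carlitzH_eq_card, ← Finset.card_product,
    ← Finset.filter_product]
  apply Finset.card_bij' (fun c _ => e c) (fun x _ => e.symm x)
  · intro c hc
    simp only [Finset.mem_filter, Finset.mem_univ, Finset.mem_product, true_and, and_self] at hc ⊢
    have h1 : IsUnit (e c) := (mulEquivIsUnit e.toMulEquiv c).2 hc.1
    have h2 : IsUnit (e (1 + c)) := (mulEquivIsUnit e.toMulEquiv _).2 hc.2
    rw [map_add, map_one] at h2
    rw [prodIsUnitIff] at h1
    rw [prodIsUnitIff] at h2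
    simp only [Prod.fst_add, Prod.snd_add, Prod.fst_one, Prod.snd_one] at h2
    exact ⟨⟨h1.1, h2.1⟩, ⟨h1.2, h2.2⟩⟩
  · intro x hx
    simp only [Finset.mem_filter, Finset.mem_univ, Finset.mem_product, true_and, and_self] at hx ⊢
    obtain ⟨⟨hx1, hx1'⟩, hx2, hx2'⟩ := hx
    constructor
    · rw [← mulEquivIsUnit e.toMulEquiv]
      rw [show e.toMulEquiv (e.symm x) = x from e.apply_symm_apply x]
      exact (prodIsUnitIff x).2 ⟨hx1, hx2⟩
    · rw [← mulEquivIsUnit e.toMulEquiv]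
      show IsUnit (e (1 + e.symm x))
      rw [map_add, map_one, e.apply_symm_apply]
      refine (prodIsUnitIff _).2 ⟨?_, ?_⟩
      · simpa using hx1'
      · simpa using hx2'
  · intro c _; exact e.symm_apply_apply c
  · intro x _; exact e.apply_symm_apply x

lemma isUnit_iff_castHom_ne_zero {p k : ℕ} (hp : p.Prime) (hk : k ≠ 0) (c : ZMod (p ^ k)) :
    IsUnit c ↔ (ZMod.castHom (dvd_pow_self p hk) (ZMod p)) c ≠ 0 := by
  haveI : Fact p.Prime := ⟨hp⟩
  haveI : NeZero (p ^ k) := ⟨pow_ne_zero _ hp.pos.ne'⟩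
  have h1 := ZMod.isUnit_iff_coprime c.val (p ^ k)
  rw [ZMod.natCast_zmod_val] at h1
  have h2 : (ZMod.castHom (dvd_pow_self p hk) (ZMod p)) c = ((c.val : ℕ) : ZMod p) := by
    rw [ZMod.castHom_apply, ZMod.natCast_val]
  rw [h1, h2, Ne, ZMod.natCast_eq_zero_iff,
    Nat.coprime_pow_right_iff (Nat.pos_of_ne_zero hk), Nat.coprime_comm,
    hp.coprime_iff_not_dvd]

lemma fiber_card {p k : ℕ} [NeZero (p ^ k)] (hp : p.Prime) (hk : k ≠ 0) (y : ZMod p) :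
    (Finset.univ.filter
      (fun c : ZMod (p ^ k) => (ZMod.castHom (dvd_pow_self p hk) (ZMod p)) c = y)).card
      = p ^ (k - 1) := by
  haveI : Fact p.Prime := ⟨hp⟩
  have hyv : y.val < p := ZMod.val_lt y
  have hpk : p ^ k = p ^ (k - 1) * p := by
    rw [← pow_succ]; congr 1; omega
  symm
  rw [← Finset.card_range (p ^ (k - 1))]
  apply Finset.card_bij (fun j _ => ((y.val + p * j : ℕ) : ZMod (p ^ k)))
  · intro j hj
    simp only [Finset.mem_filter, Finset.mem_univ, true_and]
    rw [map_natCast]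
    push_cast
    simp [ZMod.natCast_self, ZMod.natCast_zmod_val]
  · intro j hj j' hj' hee
    simp only [Finset.mem_range] at hj hj'
    have hlt : ∀ i : ℕ, i < p ^ (k - 1) → y.val + p * i < p ^ k := by
      intro i hi
      calc y.val + p * i < p + p * i := by omega
        _ = p * (i + 1) := by ring
        _ ≤ p * p ^ (k - 1) := by exact Nat.mul_le_mul_left p hi
        _ = p ^ k := by rw [hpk]; ring
    have := hee
    apply_fun ZMod.val at this
    rw [ZMod.val_natCast_of_lt (hlt j hj), ZMod.val_natCast_of_lt (hlt j' hj')] at this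
    have h3 : p * j = p * j' := by omega
    exact Nat.eq_of_mul_eq_mul_left hp.pos h3
  · intro c hc
    simp only [Finset.mem_filter, Finset.mem_univ, true_and] at hc
    have h2 : (ZMod.castHom (dvd_pow_self p hk) (ZMod p)) c = ((c.val : ℕ) : ZMod p) := by
      rw [ZMod.castHom_apply, ZMod.natCast_val]
    rw [h2] at hc
    have hmod : c.val % p = y.val := by
      have := congrArg ZMod.val hc
      rwa [ZMod.val_natCast] at this
    refine ⟨c.val / p, Finset.mem_range.2 ?_, ?_⟩
    · have hlt : c.val < p * p ^ (k - 1) :=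
        lt_of_lt_of_eq (ZMod.val_lt c) (by rw [hpk]; ring)
      exact Nat.div_lt_of_lt_mul hlt
    · have : y.val + p * (c.val / p) = c.val := by
        rw [← hmod]; exact Nat.mod_add_div _ _
      rw [this, ZMod.natCast_zmod_val]

open scoped Classical in
lemma carlitzH_prime_pow {p k : ℕ} (hp : p.Prime) (hk : k ≠ 0) [NeZero (p ^ k)] :
    carlitzH (p ^ k) = p ^ (k - 1) * (p - 2) := by
  haveI : Fact p.Prime := ⟨hp⟩
  set f := ZMod.castHom (dvd_pow_self p hk) (ZMod p) with hf
  rw [carlitzH_eq_card]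
  have key : (Finset.univ.filter (fun c : ZMod (p ^ k) => IsUnit c ∧ IsUnit (1 + c)))
      = Finset.univ \ (Finset.univ.filter (fun c : ZMod (p ^ k) => f c = 0)
        ∪ Finset.univ.filter (fun c : ZMod (p ^ k) => f c = -1)) := by
    ext c
    simp only [Finset.mem_filter, Finset.mem_univ, true_and, Finset.mem_sdiff,
      Finset.mem_union, not_or]
    rw [isUnit_iff_castHom_ne_zero hp hk, isUnit_iff_castHom_ne_zero hp hk, map_add, map_one]
    constructor
    · rintro ⟨h1, h2⟩
      exact ⟨h1, fun h => h2 (by rw [h]; ring)⟩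
    · rintro ⟨h1, h2⟩
      exact ⟨h1, fun h => h2 (by linear_combination (h : (1 : ZMod p) + f c = 0))⟩
  rw [key, Finset.card_sdiff_of_subset (Finset.subset_univ _), Finset.card_union_of_disjoint, fiber_card hp hk,
    fiber_card hp hk, Finset.card_univ, ZMod.card]
  · have hpk : p ^ k = p ^ (k - 1) * p := by rw [← pow_succ]; congr 1; omega
    have h2 : 2 ≤ p := hp.two_le
    rw [hpk, Nat.mul_sub]
    omega
  · rw [Finset.disjoint_filter]
    intro c _ h0 h1
    rw [h0] at h1
    exact (neg_ne_zero.2 (one_ne_zero : (1 : ZMod p) ≠ 0)) h1.symm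

lemma carlitzH_formula (n : ℕ) (hn : 0 < n) :
    (carlitzH n : ℚ) = (Nat.totient n : ℚ) *
      ∏ p ∈ n.primeFactors, (1 - 1 / ((p : ℚ) - 1)) := by
  revert hn
  induction n using Nat.recOnPosPrimePosCoprime with
  | prime_pow p k hp hk =>
    intro _
    haveI : NeZero (p ^ k) := ⟨pow_ne_zero _ hp.pos.ne'⟩
    have hp' : p.Prime := hp
    rw [carlitzH_prime_pow hp' hk.ne', Nat.totient_prime_pow hp' hk,
      Nat.primeFactors_prime_pow hk.ne' hp', Finset.prod_singleton]
    have h2 : 2 ≤ p := hp'.two_le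
    have hne : (p : ℚ) - 1 ≠ 0 := by
      have : (2 : ℚ) ≤ (p : ℚ) := by exact_mod_cast h2
      intro h; nlinarith
    push_cast [Nat.cast_sub h2, Nat.cast_sub (le_trans one_le_two h2)]
    field_simp
    ring
  | zero => intro h; omega
  | one => intro _; simp [carlitzH_one]
  | coprime a b ha hb hab iha ihb =>
    intro _
    haveI : NeZero a := ⟨by omega⟩
    haveI : NeZero b := ⟨by omega⟩
    rw [carlitzH_mul hab, Nat.totient_mul hab, hab.primeFactors_mul,
      Finset.prod_union hab.disjoint_primeFactors]
    push_cast
    rw [iha (by omega), ihb (by omega)]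
    ring

lemma icc_cast_inj {n a b : ℕ} (ha : a ∈ Finset.Icc 1 n) (hb : b ∈ Finset.Icc 1 n)
    (h : (a : ZMod n) = b) : a = b := by
  rw [Finset.mem_Icc] at ha hb
  rw [ZMod.natCast_eq_natCast_iff] at h
  have h' : a % n = b % n := h
  rcases eq_or_lt_of_le ha.2 with rfl | h1
  · rw [Nat.mod_self] at h'
    rcases eq_or_lt_of_le hb.2 with rfl | h2
    · rfl
    · rw [Nat.mod_eq_of_lt h2] at h'; omega
  · rw [Nat.mod_eq_of_lt h1] at h'
    rcases eq_or_lt_of_le hb.2 with rfl | h2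
    · rw [Nat.mod_self] at h'; omega
    · rw [Nat.mod_eq_of_lt h2] at h'; omega

lemma exists_icc_rep {n : ℕ} [NeZero n] (x : ZMod n) :
    ∃ a ∈ Finset.Icc 1 n, (a : ZMod n) = x := by
  rcases eq_or_ne x 0 with rfl | hx
  · exact ⟨n, by simp [Finset.mem_Icc, Nat.one_le_iff_ne_zero, NeZero.ne n], by simp⟩
  · refine ⟨x.val, ?_, ZMod.natCast_zmod_val x⟩
    rw [Finset.mem_Icc]
    exact ⟨Nat.one_le_iff_ne_zero.2 fun h => hx ((ZMod.val_eq_zero x).1 h),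
      (ZMod.val_lt x).le⟩

open scoped Classical in
lemma phiTwo_eq (n : ℕ) [NeZero n] : phiTwo n = n.totient * carlitzH n := by
  -- step 1: transfer to ZMod
  have step1 : phiTwo n = (Finset.univ.filter
      (fun x : ZMod n × ZMod n => IsUnit x.1 ∧ IsUnit x.2 ∧ IsUnit (x.1 + x.2))).card := by
    rw [phiTwo]
    apply Finset.card_bij (fun a _ => (((a.1 : ℕ) : ZMod n), ((a.2 : ℕ) : ZMod n)))
    · rintro ⟨a1, a2⟩ ha
      simp only [Finset.mem_filter, Finset.mem_product] at ha
      obtain ⟨⟨h1, h2⟩, hmul, hsum⟩ := ha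
      rw [← Nat.coprime_iff_gcd_eq_one, Nat.coprime_mul_iff_left] at hmul
      simp only [Finset.mem_filter, Finset.mem_univ, true_and]
      refine ⟨(ZMod.isUnit_iff_coprime _ _).2 hmul.1, (ZMod.isUnit_iff_coprime _ _).2 hmul.2, ?_⟩
      have : ((a1 : ZMod n) + (a2 : ZMod n)) = (((a1 + a2 : ℕ)) : ZMod n) := by push_cast; ring
      rw [this]
      exact (ZMod.isUnit_iff_coprime _ _).2 (Nat.coprime_iff_gcd_eq_one.1 hsum)
    · rintro ⟨a1, a2⟩ ha ⟨b1, b2⟩ hb hab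
      simp only [Finset.mem_filter, Finset.mem_product] at ha hb
      simp only [Prod.mk.injEq] at hab
      exact Prod.ext (icc_cast_inj ha.1.1 hb.1.1 hab.1) (icc_cast_inj ha.1.2 hb.1.2 hab.2)
    · rintro ⟨x, y⟩ hxy
      simp only [Finset.mem_filter, Finset.mem_univ, true_and] at hxy
      obtain ⟨hx, hy, hxy'⟩ := hxy
      obtain ⟨a1, ha1, rfl⟩ := exists_icc_rep x
      obtain ⟨a2, ha2, rfl⟩ := exists_icc_rep y
      refine ⟨(a1, a2), ?_, rfl⟩
      simp only [Finset.mem_filter, Finset.mem_product]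
      refine ⟨⟨ha1, ha2⟩, ?_, ?_⟩
      · rw [← Nat.coprime_iff_gcd_eq_one, Nat.coprime_mul_iff_left]
        exact ⟨(ZMod.isUnit_iff_coprime _ _).1 hx, (ZMod.isUnit_iff_coprime _ _).1 hy⟩
      · rw [← Nat.coprime_iff_gcd_eq_one, ← ZMod.isUnit_iff_coprime]
        push_cast
        exact hxy'
  rw [step1]
  -- step 2: fiberwise count
  have step2 : (Finset.univ.filter
      (fun x : ZMod n × ZMod n => IsUnit x.1 ∧ IsUnit x.2 ∧ IsUnit (x.1 + x.2))).card
      = ∑ a ∈ Finset.univ.filter (IsUnit : ZMod n → Prop),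
          (Finset.univ.filter (fun b : ZMod n => IsUnit b ∧ IsUnit (a + b))).card := by
    rw [Finset.card_filter]
    rw [Fintype.sum_prod_type]
    rw [Finset.sum_filter]
    congr 1
    ext a
    rw [Finset.card_filter]
    by_cases ha : IsUnit a
    · simp [ha]
    · simp [ha]
  rw [step2]
  -- step 3: each fiber has size carlitzH n
  have step3 : ∀ a : ZMod n, IsUnit a →
      (Finset.univ.filter (fun b : ZMod n => IsUnit b ∧ IsUnit (a + b))).card = carlitzH n := by
    intro a ha
    obtain ⟨u, rfl⟩ := ha
    rw [carlitzH_eq_card]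
    symm
    apply Finset.card_bij' (fun c _ => (u : ZMod n) * c) (fun b _ => ((u⁻¹ : (ZMod n)ˣ) : ZMod n) * b)
    · intro c hc
      simp only [Finset.mem_filter, Finset.mem_univ, true_and] at hc ⊢
      refine ⟨u.isUnit.mul hc.1, ?_⟩
      have : (u : ZMod n) + (u : ZMod n) * c = (u : ZMod n) * (1 + c) := by ring
      rw [this]
      exact u.isUnit.mul hc.2
    · intro b hb
      simp only [Finset.mem_filter, Finset.mem_univ, true_and] at hb ⊢
      refine ⟨(u⁻¹).isUnit.mul hb.1, ?_⟩
      have : (1 : ZMod n) + ((u⁻¹ : (ZMod n)ˣ) : ZMod n) * b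
          = ((u⁻¹ : (ZMod n)ˣ) : ZMod n) * ((u : ZMod n) + b) := by
        rw [mul_add, Units.inv_mul]
      rw [this]
      exact (u⁻¹).isUnit.mul hb.2
    · intro c _; exact u.inv_mul_cancel_left c
    · intro b _; exact u.mul_inv_cancel_left b
  rw [Finset.sum_congr rfl (fun a ha => step3 a (Finset.mem_filter.1 ha).2)]
  rw [Finset.sum_const, smul_eq_mul]
  congr 1
  -- card of unit filter = totient
  rw [← ZMod.card_units_eq_totient]
  rw [Fintype.card]
  symm
  apply Finset.card_bij (fun (u : (ZMod n)ˣ) _ => (u : ZMod n))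
  · intro u _; simp [u.isUnit]
  · intro u _ v _ h; exact Units.ext h
  · intro x hx
    simp only [Finset.mem_filter, Finset.mem_univ, true_and] at hx
    obtain ⟨u, rfl⟩ := hx
    exact ⟨u, Finset.mem_univ u, rfl⟩

/-- **Carlitz's formula**: `φ₂(n) = φ(n)² · ∏_{p ∣ n} (1 − 1/(p−1))`. -/
theorem phiTwo_formula (n : ℕ) (hn : 0 < n) :
    (phiTwo n : ℚ) = (Nat.totient n : ℚ) ^ 2 *
      ∏ p ∈ n.primeFactors, (1 - 1 / ((p : ℚ) - 1)) := by
  haveI : NeZero n := ⟨hn.ne'⟩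
  rw [phiTwo_eq n]
  push_cast
  rw [carlitzH_formula n hn]
  ring
end
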